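/- Let f be a polynomial with rational coefficients of degree d. Then for every rational n, I_f(n) = S_f(n) + ∑_{r=1}^{d+1} G_r · (Δ^{r−1} f(n) − Δ^{r−1} f(0)), where I_f is the antiderivative of f with I_f(0) = 0 (so I_f(n) = ∫_0^n f(t) dt), Δ is the unit-step forward difference operator, and G_r are the Gregory coefficients. (This is Gregory's quadrature formula for polynomials, obtained as the x → 0⁺ case of the generalized summation formula.) -/

import Mathlib

/-- The unit-step forward difference operator `Δ f(t) = f(t+1) - f(t)` on polynomials. -/
noncomputable def fdiff (p : Polynomial ℚ) : Polynomial ℚ :=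
  p.comp (Polynomial.X + 1) - p


namespace Gregory

open Polynomial Finset

noncomputable def fdiffL : Polynomial ℚ →ₗ[ℚ] Polynomial ℚ where
  toFun := fdiff
  map_add' p q := by simp only [fdiff, add_comp]; ring
  map_smul' c p := by simp only [fdiff, smul_comp, RingHom.id_apply, smul_sub]

lemma fdiffL_apply (p : Polynomial ℚ) : fdiffL p = fdiff p := rfl

lemma iterate_eq (r : ℕ) (p : Polynomial ℚ) : fdiff^[r] p = (fdiffL ^ r) p := by
  rw [Module.End.pow_apply]; rfl

lemma fdiff_C (c : ℚ) : fdiff (Polynomial.C c) = 0 := by simp [fdiff]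

lemma fdiff_zero : fdiff (0 : Polynomial ℚ) = 0 := by simp [fdiff]

lemma fdiff_of_natDegree_eq_zero (p : Polynomial ℚ) (hp : p.natDegree = 0) : fdiff p = 0 := by
  rw [Polynomial.eq_C_of_natDegree_eq_zero hp]; exact fdiff_C _

lemma natDegree_fdiff_lt (p : Polynomial ℚ) (hp : p.natDegree ≠ 0) :
    (fdiff p).natDegree < p.natDegree := by
  rcases eq_or_ne (fdiff p) 0 with h | h
  · rw [h]; simpa using Nat.pos_of_ne_zero hp
  · have hp0 : p ≠ 0 := fun h0 => hp (by simp [h0])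
    have hX1 : (X + 1 : Polynomial ℚ) = X + C 1 := by simp
    have hnd : (p.comp (X + 1)).natDegree = p.natDegree := by
      have := natDegree_taylor p 1
      rw [taylor_apply] at this
      rw [hX1, this]
    have hc0 : p.comp (X + 1) ≠ 0 := fun h0 => hp (by rw [← hnd, h0]; simp)
    have hlc : (p.comp (X + 1)).leadingCoeff = p.leadingCoeff := by
      rw [leadingCoeff_comp (by rw [hX1, natDegree_X_add_C]; omega : (X + 1 : Polynomial ℚ).natDegree ≠ 0)]
      have : (X + 1 : Polynomial ℚ).leadingCoeff = 1 := by
        rw [hX1]; exact (monic_X_add_C (1:ℚ)).leadingCoeff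
      rw [this, one_pow, mul_one]
    have hdeg : (p.comp (X + 1)).degree = p.degree := by
      rw [degree_eq_natDegree hc0, degree_eq_natDegree hp0, hnd]
    have := degree_sub_lt hdeg hc0 hlc
    rw [hdeg] at this
    exact natDegree_lt_natDegree h (by rw [fdiff] at h ⊢; exact this)

lemma iterate_fdiff_zero (k : ℕ) : fdiff^[k] (0 : Polynomial ℚ) = 0 :=
  Function.iterate_fixed fdiff_zero k

lemma vanish : ∀ (k : ℕ) (p : Polynomial ℚ), p.natDegree < k → fdiff^[k] p = 0 := by
  intro k
  induction k with
  | zero => intro p h; omega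
  | succ k ih =>
    intro p h
    rw [Function.iterate_succ_apply]
    rcases eq_or_ne p.natDegree 0 with h0 | h0
    · rw [fdiff_of_natDegree_eq_zero p h0, iterate_fdiff_zero]
    · exact ih _ (by have := natDegree_fdiff_lt p h0; omega)

lemma fdiff_eq_zero_imp (p : Polynomial ℚ) (h : fdiff p = 0) : p = Polynomial.C (p.eval 0) := by
  have hc : p.comp (X + 1) = p := by rwa [fdiff, sub_eq_zero] at h
  have key : ∀ k : ℕ, p.eval (k : ℚ) = p.eval 0 := by
    intro k
    induction k with
    | zero => simp
    | succ k ih =>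
      have := congrArg (eval (k : ℚ)) hc
      rw [eval_comp] at this
      simp only [eval_add, eval_X, eval_one] at this
      push_cast
      rw [← ih, ← this]
  have hz : p - C (p.eval 0) = 0 := by
    apply eq_zero_of_infinite_isRoot
    apply Set.Infinite.mono (s := Set.range (Nat.cast : ℕ → ℚ))
    · rintro x ⟨k, rfl⟩
      simp [IsRoot, key k]
    · exact Set.infinite_range_of_injective Nat.cast_injective
  linear_combination (norm := ring_nf) hz


noncomputable def b : ℕ → Polynomial ℚ
  | 0 => 1
  | (m+1) => Polynomial.C (((m : ℚ)+1)⁻¹) * ((X - C (m:ℚ)) * b m)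

lemma b_succ_mul (m : ℕ) : C ((m:ℚ)+1) * b (m+1) = (X - C (m:ℚ)) * b m := by
  have h : ((m:ℚ)+1) ≠ 0 := by positivity
  rw [show b (m+1) = Polynomial.C (((m : ℚ)+1)⁻¹) * ((X - C (m:ℚ)) * b m) from rfl,
    ← mul_assoc, ← C_mul, mul_inv_cancel₀ h, C_1, one_mul]

noncomputable def a (i : ℕ) : ℚ := (-1)^i / ((i:ℚ)+1)

lemma ha_mul (i : ℕ) : ((i:ℚ)+1) * a i = (-1)^i := by
  have h : ((i:ℚ)+1) ≠ 0 := by positivity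
  unfold a; field_simp

lemma X_mul_b (j : ℕ) (r : ℚ) :
    (X - C r) * b j = ((j:ℚ)+1) • b (j+1) - (r - (j:ℚ)) • b j := by
  have hb := b_succ_mul j
  simp only [smul_eq_C_mul, C_add, C_sub, C_1] at *
  linear_combination -hb

lemma derivative_b : ∀ m : ℕ, derivative (b m) = ∑ i ∈ range m, a i • b (m - 1 - i) := by
  intro m
  induction m with
  | zero => simp [show b 0 = 1 from rfl]
  | succ m ih =>
    have ha1 : ((m:ℚ)+1) ≠ 0 := by positivity
    have hD : derivative (b (m+1)) =
        C (((m:ℚ)+1)⁻¹) * (b m + (X - C (m:ℚ)) * derivative (b m)) := by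
      rw [show b (m+1) = Polynomial.C (((m : ℚ)+1)⁻¹) * ((X - C (m:ℚ)) * b m) from rfl]
      rw [derivative_C_mul, derivative_mul, derivative_sub, derivative_X, derivative_C]
      ring
    have hmain : b m + (X - C (m:ℚ)) * derivative (b m)
        = ((m:ℚ)+1) • ∑ i ∈ range (m+1), a i • b (m - i) := by
      rw [ih, Finset.mul_sum, Finset.smul_sum]
      have hR : ∀ i ∈ range (m+1), ((m:ℚ)+1) • (a i • b (m-i))
          = (((m:ℚ)-(i:ℚ)) * a i) • b (m-i) + ((-1:ℚ)^i) • b (m-i) := by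
        intro i _
        rw [smul_smul, ← ha_mul i, ← add_smul]
        ring_nf
      have hL : ∀ i ∈ range m, (X - C (m:ℚ)) * (a i • b (m-1-i))
          = (((m:ℚ)-(i:ℚ)) * a i) • b (m-i) - ((-1:ℚ)^i) • b (m-1-i) := by
        intro i hi
        rw [mem_range] at hi
        have e1 : (m - 1 - i) + 1 = m - i := by omega
        have e2 : ((m-1-i : ℕ):ℚ) = (m:ℚ) - 1 - (i:ℚ) := by
          rw [Nat.sub_sub, Nat.cast_sub (by omega)]
          push_cast; ring
        rw [mul_smul_comm, X_mul_b (m-1-i) ((m:ℚ)), e1, e2, smul_sub, smul_smul, smul_smul]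
        rw [show a i * ((m:ℚ) - 1 - (i:ℚ) + 1) = ((m:ℚ)-(i:ℚ)) * a i from by ring,
          show a i * ((m:ℚ) - ((m:ℚ) - 1 - (i:ℚ))) = ((i:ℚ)+1) * a i from by ring,
          ha_mul i]
      rw [Finset.sum_congr rfl hR, Finset.sum_add_distrib,
        Finset.sum_congr rfl hL, Finset.sum_sub_distrib]
      rw [Finset.sum_range_succ (fun i => (((m:ℚ)-(i:ℚ)) * a i) • b (m-i)),
        show (((m:ℚ)-(m:ℚ)) * a m) • b (m-m) = 0 from by simp,
        Finset.sum_range_succ' (fun i => ((-1:ℚ)^i) • b (m-i))]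
      have hre : ∀ i ∈ range m, ((-1:ℚ)^(i+1)) • b (m-(i+1))
          = -(((-1:ℚ)^i) • b (m-1-i)) := by
        intro i hi
        rw [show m - (i+1) = m - 1 - i from by omega, pow_succ]
        rw [← neg_smul]; ring_nf
      rw [Finset.sum_congr rfl hre, Finset.sum_neg_distrib]
      simp only [pow_zero, Nat.sub_zero, one_smul, add_zero]
      abel
    rw [hD, hmain, smul_eq_C_mul, ← mul_assoc, ← C_mul, inv_mul_cancel₀ ha1, C_1, one_mul]
    apply Finset.sum_congr rfl
    intro i _
    rw [show m + 1 - 1 - i = m - i from by omega]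

lemma fdiff_b_succ : ∀ m : ℕ, fdiff (b (m+1)) = b m := by
  intro m
  induction m with
  | zero =>
    have h1 : b 1 = X := by
      rw [show b 1 = Polynomial.C (((0:ℕ) : ℚ)+1)⁻¹ * ((X - C ((0:ℕ):ℚ)) * b 0) from rfl]
      simp [b]
    rw [h1, show b 0 = 1 from rfl]
    simp [fdiff]
  | succ m ih =>
    have hcomp : (b (m+1)).comp (X+1) = b (m+1) + b m := by
      rw [← ih, fdiff]; ring
    have ha : ((m:ℚ)+1+1) ≠ 0 := by positivity
    have hinv : C (((m:ℚ)+1+1)⁻¹) * C ((m:ℚ)+1+1) = 1 := by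
      rw [← C_mul, inv_mul_cancel₀ ha, C_1]
    have hb1 := b_succ_mul m
    rw [show b (m+2) = Polynomial.C ((((m+1:ℕ)):ℚ)+1)⁻¹ * ((X - C (((m+1:ℕ)):ℚ)) * b (m+1)) from rfl]
    rw [fdiff]
    simp only [mul_comp, sub_comp, X_comp, C_comp, hcomp]
    push_cast
    simp only [C_add, C_1] at hb1 hinv ⊢
    linear_combination (-(C (((m:ℚ)+1+1)⁻¹))) * hb1 + b (m+1) * hinv

lemma fdiff_b_zero : fdiff (b 0) = 0 := by
  rw [show b 0 = 1 from rfl]; simp [fdiff]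

lemma b_eval_zero_succ : ∀ m : ℕ, (b (m+1)).eval 0 = 0 := by
  intro m
  induction m with
  | zero => simp [b]
  | succ m ih =>
    rw [show b (m+2) = Polynomial.C (((m+1:ℕ) : ℚ)+1)⁻¹ * ((X - C ((m+1:ℕ):ℚ)) * b (m+1)) from rfl]
    simp [ih]

lemma fdiff_iter_b (r : ℕ) : ∀ m : ℕ, fdiff^[r] (b m) = if r ≤ m then b (m - r) else 0 := by
  induction r with
  | zero => intro m; simp
  | succ r ih =>
    intro m
    rw [Function.iterate_succ_apply]
    cases m with
    | zero =>
      rw [fdiff_b_zero, iterate_fdiff_zero]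
      simp
    | succ m =>
      rw [fdiff_b_succ m, ih m]
      by_cases h : r ≤ m
      · rw [if_pos h, if_pos (by omega), show m + 1 - (r+1) = m - r from by omega]
      · rw [if_neg h, if_neg (by omega)]

lemma newton : ∀ (N : ℕ) (p : Polynomial ℚ), p.natDegree ≤ N →
    p = ∑ k ∈ range (N+1), ((fdiff^[k] p).eval 0) • b k := by
  intro N
  induction N with
  | zero =>
    intro p h
    have h0 : p.natDegree = 0 := Nat.le_zero.mp h
    rw [Finset.sum_range_one]
    simp only [Function.iterate_zero, id_eq]
    rw [show b 0 = 1 from rfl, smul_eq_C_mul, mul_one]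
    conv_lhs => rw [Polynomial.eq_C_of_natDegree_eq_zero h0]
    rw [Polynomial.eq_C_of_natDegree_eq_zero h0]
    simp
  | succ N ih =>
    intro p h
    set q := fdiff p with hqdef
    have hq : q.natDegree ≤ N := by
      rcases eq_or_ne p.natDegree 0 with h0 | h0
      · rw [hqdef, fdiff_of_natDegree_eq_zero p h0]; simp
      · have := natDegree_fdiff_lt p h0
        rw [← hqdef] at this; omega
    have hIH := ih q hq
    set R := ∑ k ∈ range (N+2), ((fdiff^[k] p).eval 0) • b k with hRdef
    have hfR : fdiff R = q := by
      have : fdiff R = ∑ k ∈ range (N+2), ((fdiff^[k] p).eval 0) • fdiff (b k) := by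
        rw [← fdiffL_apply, hRdef, map_sum]
        apply Finset.sum_congr rfl
        intro k _
        rw [map_smul, fdiffL_apply]
      rw [this, Finset.sum_range_succ']
      simp only [fdiff_b_zero, smul_zero, add_zero]
      rw [hIH]
      apply Finset.sum_congr rfl
      intro k _
      rw [fdiff_b_succ k, Function.iterate_succ_apply]
    have heR : R.eval 0 = p.eval 0 := by
      rw [hRdef, Polynomial.eval_finset_sum, Finset.sum_range_succ']
      simp [b_eval_zero_succ, show b 0 = 1 from rfl]
    have hzero : fdiff (p - R) = 0 := by
      rw [← fdiffL_apply, map_sub, fdiffL_apply, fdiffL_apply, hfR, ← hqdef, sub_self]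
    have := fdiff_eq_zero_imp _ hzero
    rw [Polynomial.eval_sub, heR, sub_self, map_zero] at this
    exact sub_eq_zero.mp this

lemma tri {M : Type*} [AddCommMonoid M] (m : ℕ) (h : ℕ → ℕ → M) :
    ∑ r ∈ range (m+1), ∑ i ∈ range (m - r), h r i
    = ∑ t ∈ range m, ∑ r ∈ range (t+1), h r (t - r) := by
  induction m with
  | zero => simp
  | succ m ih =>
    rw [Finset.sum_range_succ (f := fun r => ∑ i ∈ range (m + 1 - r), h r i)]
    have hsplit : ∀ r ∈ range (m+1), ∑ i ∈ range (m+1-r), h r i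
        = (∑ i ∈ range (m-r), h r i) + h r (m-r) := by
      intro r hr; rw [mem_range] at hr
      rw [show m+1-r = (m-r)+1 from by omega, Finset.sum_range_succ]
    rw [Finset.sum_congr rfl hsplit, Finset.sum_add_distrib, ih,
      Finset.sum_range_succ (f := fun t => ∑ r ∈ range (t+1), h r (t - r))]
    simp

lemma key_basis (G : ℕ → ℚ)
    (hconv : ∀ t : ℕ, ∑ r ∈ range (t+1), G r * a (t - r) = if t = 0 then 1 else 0)
    (m N : ℕ) (hm : m ≤ N) :
    derivative (∑ r ∈ range (N+1), G r • fdiff^[r] (b m)) = fdiff (b m) := by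
  have htrim : (∑ r ∈ range (N+1), G r • fdiff^[r] (b m))
      = ∑ r ∈ range (m+1), G r • b (m - r) := by
    rw [← Finset.sum_subset (Finset.range_subset_range.mpr (by omega) : range (m+1) ⊆ range (N+1))]
    · apply Finset.sum_congr rfl
      intro r hr; rw [mem_range] at hr
      rw [fdiff_iter_b, if_pos (by omega)]
    · intro r hr1 hr2
      rw [mem_range] at hr1; rw [mem_range] at hr2
      rw [fdiff_iter_b, if_neg (by omega), smul_zero]
  rw [htrim, derivative_sum]
  have hterm : ∀ r ∈ range (m+1), derivative (G r • b (m - r))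
      = ∑ i ∈ range (m - r), (G r * a i) • b (m - r - 1 - i) := by
    intro r _
    rw [derivative_smul, derivative_b (m - r), Finset.smul_sum]
    apply Finset.sum_congr rfl
    intro i _
    rw [smul_smul]
  rw [Finset.sum_congr rfl hterm, tri]
  have hinner : ∀ t ∈ range m, (∑ r ∈ range (t+1), (G r * a (t - r)) • b (m - r - 1 - (t - r)))
      = if t = 0 then b (m - 1) else 0 := by
    intro t ht; rw [mem_range] at ht
    have : ∀ r ∈ range (t+1), (G r * a (t - r)) • b (m - r - 1 - (t - r))
        = (G r * a (t - r)) • b (m - 1 - t) := by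
      intro r hr; rw [mem_range] at hr
      rw [show m - r - 1 - (t - r) = m - 1 - t from by omega]
    rw [Finset.sum_congr rfl this, ← Finset.sum_smul, hconv t]
    split_ifs with h
    · rw [one_smul, h]; norm_num
    · rw [zero_smul]
  rw [Finset.sum_congr rfl hinner]
  cases m with
  | zero => simp [fdiff_b_zero]
  | succ m =>
    rw [Finset.sum_ite_eq' (range (m+1)) 0 (fun _ => b (m+1-1))]
    rw [if_pos (by simp), fdiff_b_succ]
    norm_num

lemma key (G : ℕ → ℚ)
    (hconv : ∀ t : ℕ, ∑ r ∈ range (t+1), G r * a (t - r) = if t = 0 then 1 else 0)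
    (N : ℕ) (S : Polynomial ℚ) (hdeg : S.natDegree ≤ N) :
    derivative (∑ r ∈ range (N+1), G r • fdiff^[r] S) = fdiff S := by
  have hexp := newton N S hdeg
  have hswap : ∀ r : ℕ, fdiff^[r] S
      = ∑ m ∈ range (N+1), ((fdiff^[m] S).eval 0) • fdiff^[r] (b m) := by
    intro r
    conv_lhs => rw [hexp]
    rw [iterate_eq, map_sum]
    apply Finset.sum_congr rfl
    intro m _
    rw [map_smul, ← iterate_eq]
  have hre : (∑ r ∈ range (N+1), G r • fdiff^[r] S)
      = ∑ m ∈ range (N+1), ((fdiff^[m] S).eval 0) •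
          (∑ r ∈ range (N+1), G r • fdiff^[r] (b m)) := by
    calc (∑ r ∈ range (N+1), G r • fdiff^[r] S)
        = ∑ r ∈ range (N+1), ∑ m ∈ range (N+1),
            ((fdiff^[m] S).eval 0) • (G r • fdiff^[r] (b m)) := by
          apply Finset.sum_congr rfl
          intro r _
          rw [hswap r, Finset.smul_sum]
          apply Finset.sum_congr rfl
          intro m _
          rw [smul_comm]
      _ = ∑ m ∈ range (N+1), ∑ r ∈ range (N+1),
            ((fdiff^[m] S).eval 0) • (G r • fdiff^[r] (b m)) := Finset.sum_comm
      _ = _ := by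
          apply Finset.sum_congr rfl
          intro m _
          rw [Finset.smul_sum]
  rw [hre, derivative_sum]
  have hterm : ∀ m ∈ range (N+1),
      derivative (((fdiff^[m] S).eval 0) • (∑ r ∈ range (N+1), G r • fdiff^[r] (b m)))
      = ((fdiff^[m] S).eval 0) • fdiff (b m) := by
    intro m hm; rw [mem_range] at hm
    rw [derivative_smul, key_basis G hconv m N (by omega)]
  rw [Finset.sum_congr rfl hterm]
  have : (∑ m ∈ range (N+1), ((fdiff^[m] S).eval 0) • fdiff (b m))
      = fdiff (∑ m ∈ range (N+1), ((fdiff^[m] S).eval 0) • b m) := by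
    rw [← fdiffL_apply, map_sum]
    apply Finset.sum_congr rfl
    intro m _
    rw [map_smul, fdiffL_apply]
  rw [this, ← hexp]

end Gregory

/-- **Gregory's quadrature formula for polynomials**: if `f` has degree `d`, `S` is the
fractional sum of `f`, `I` is the antiderivative of `f` with `I(0) = 0`, and `G_r` are the
Gregory coefficients (the coefficients of `z/log(1+z)`, i.e. of the multiplicative inverse of
`∑_{r≥0} ((-1)^r/(r+1)) z^r`), then for every rational `n`,
`I(n) = S(n) + ∑_{r=1}^{d+1} G_r (Δ^{r-1} f(n) - Δ^{r-1} f(0))`. -/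
theorem gregory_quadrature_for_polynomials
    (G : ℕ → ℚ)
    (hG : PowerSeries.mk G *
        PowerSeries.mk (fun r => ((-1) ^ r / ((r : ℚ) + 1) : ℚ)) = 1)
    (f : Polynomial ℚ) (d : ℕ) (hd : f.natDegree = d)
    (S : Polynomial ℚ) (hS0 : S.eval 0 = 0)
    (hS : S.comp (Polynomial.X + 1) - S = f)
    (I : Polynomial ℚ) (hI0 : I.eval 0 = 0) (hI : I.derivative = f)
    (n : ℚ) :
    I.eval n = S.eval n +
      ∑ r ∈ Finset.Icc 1 (d + 1),
        G r * ((fdiff^[r - 1] f).eval n - (fdiff^[r - 1] f).eval 0) := by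
  classical
  have hconv : ∀ t : ℕ, ∑ r ∈ Finset.range (t+1), G r * Gregory.a (t - r)
      = if t = 0 then 1 else 0 := by
    intro t
    have h := congrArg (PowerSeries.coeff (R := ℚ) t) hG
    rw [PowerSeries.coeff_mul, Finset.Nat.sum_antidiagonal_eq_sum_range_succ_mk] at h
    simp only [PowerSeries.coeff_mk, PowerSeries.coeff_one] at h
    unfold Gregory.a
    exact h
  have hG0 : G 0 = 1 := by
    have h0 := hconv 0
    simpa [Gregory.a] using h0
  set N := max (d+1) S.natDegree with hN
  have hfS : fdiff S = f := hS
  have hdegS : S.natDegree ≤ N := le_max_right _ _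
  have hder := Gregory.key G hconv N S hdegS
  rw [hfS] at hder
  have hQsum : (∑ r ∈ Finset.range (N+1), G r • fdiff^[r] S)
      = S + ∑ r ∈ Finset.Icc 1 (d+1), G r • fdiff^[r-1] f := by
    rw [Finset.sum_range_succ']
    simp only [Function.iterate_zero, id_eq]
    rw [hG0, one_smul, add_comm]
    congr 1
    have e1 : ∀ i ∈ Finset.range N, G (i+1) • fdiff^[i+1] S = G (i+1) • fdiff^[i] f := by
      intro i _
      rw [Function.iterate_succ_apply, hfS]
    rw [Finset.sum_congr rfl e1,
      ← Finset.sum_subset (Finset.range_subset_range.mpr (by omega : d+1 ≤ N))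
        (by
          intro i hi1 hi2
          rw [Finset.mem_range] at hi1 hi2
          rw [Gregory.vanish i f (by omega), smul_zero])]
    rw [← Finset.Ico_add_one_right_eq_Icc, Finset.sum_Ico_eq_sum_range]
    rw [show d+1+1-1 = d+1 from rfl]
    apply Finset.sum_congr rfl
    intro i _
    rw [show 1+i = i+1 from by omega, show i+1-1 = i from by omega]
  rw [hQsum] at hder
  set Q := S + ∑ r ∈ Finset.Icc 1 (d+1), G r • fdiff^[r-1] f with hQdef
  have hdiff : Polynomial.derivative (I - Q) = 0 := by
    rw [Polynomial.derivative_sub, hI, hder, sub_self]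
  have hconst := Polynomial.eq_C_of_natDegree_eq_zero
    (Polynomial.natDegree_eq_zero_of_derivative_eq_zero hdiff)
  have e1 := congrArg (Polynomial.eval n) hconst
  have e2 := congrArg (Polynomial.eval 0) hconst
  simp only [Polynomial.eval_sub, Polynomial.eval_C] at e1 e2
  have h1 : I.eval n - Q.eval n = I.eval 0 - Q.eval 0 := by rw [e1, e2]
  have hQeval : ∀ x : ℚ, Q.eval x
      = S.eval x + ∑ r ∈ Finset.Icc 1 (d+1), G r * (fdiff^[r-1] f).eval x := by
    intro x
    rw [hQdef, Polynomial.eval_add, Polynomial.eval_finset_sum]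
    congr 1
    apply Finset.sum_congr rfl
    intro r _
    simp [Polynomial.eval_smul, smul_eq_mul]
  rw [hQeval n, hQeval 0, hS0, hI0] at h1
  have hsplit : ∑ r ∈ Finset.Icc 1 (d+1), G r * ((fdiff^[r-1] f).eval n - (fdiff^[r-1] f).eval 0)
      = (∑ r ∈ Finset.Icc 1 (d+1), G r * (fdiff^[r-1] f).eval n)
        - ∑ r ∈ Finset.Icc 1 (d+1), G r * (fdiff^[r-1] f).eval 0 := by
    rw [← Finset.sum_sub_distrib]
    apply Finset.sum_congr rfl
    intros
    ring
  rw [hsplit]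
  linarith [h1]
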